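/- Let m be a positive odd integer, let W be a multiset of 3m integers each greater than 1, assume m divides ∑ W, and set sum = (∑ W)/m. Let G = ((m+1)/2)·K_{3,3} be the disjoint union of (m+1)/2 copies of K_{3,3}, and let S = W ⊎ {sum − 2, 1, 1}. Then G is S-fair if and only if W can be partitioned into m multisets W_1, …, W_m, each of size 3, such that ∑ W_i = sum for every i ∈ [m]. -/

import Mathlib

open scoped Classical

/-- Sum of labels over the open neighborhood of `v`. -/
noncomputable def nbrSum {V : Type*} [Fintype V] (G : SimpleGraph V) (f : V → ℕ) (v : V) : ℕ :=
  ∑ u : V, if G.Adj v u then f u else 0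

/-- `f` is a bijective labeling of `G` by the multiset `S` witnessing fairness constant `k`. -/
def IsFairLabeling {V : Type*} [Fintype V] (G : SimpleGraph V) (S : Multiset ℕ)
    (f : V → ℕ) (k : ℕ) : Prop :=
  Finset.univ.val.map f = S ∧ ∀ v : V, nbrSum G f v = k

/-- `G` is `S`-fair. -/
def IsFair {V : Type*} [Fintype V] (G : SimpleGraph V) (S : Multiset ℕ) : Prop :=
  ∃ (f : V → ℕ) (k : ℕ), IsFairLabeling G S f k

/-- The disjoint union of `t` vertex-disjoint copies of the graph `H`. -/
def copies (t : ℕ) {W : Type*} (H : SimpleGraph W) : SimpleGraph (Fin t × W) where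
  Adj x y := x.1 = y.1 ∧ H.Adj x.2 y.2
  symm := ⟨fun _ _ h => ⟨h.1.symm, h.2.symm⟩⟩
  loopless := ⟨fun x h => H.loopless.irrefl x.2 h.2⟩

private lemma map_eq_sum_singleton {α : Type*} (s : Multiset α) (f : α → ℕ) :
    (s.map fun v => ({f v} : Multiset ℕ)).sum = s.map f := by
  induction s using Multiset.induction with
  | empty => simp
  | cons a s ih => simp [ih]

private lemma sum_singleton_multiset {V : Type*} [Fintype V] (f : V → ℕ) :
    ∑ v : V, ({f v} : Multiset ℕ) = Finset.univ.val.map f :=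
  map_eq_sum_singleton _ f

private lemma nbrSum_inl (t : ℕ) (f : Fin t × (Fin 3 ⊕ Fin 3) → ℕ) (i : Fin t) (a : Fin 3) :
    nbrSum (copies t (completeBipartiteGraph (Fin 3) (Fin 3))) f (i, Sum.inl a) =
      ∑ b : Fin 3, f (i, Sum.inr b) := by
  unfold nbrSum
  rw [Fintype.sum_prod_type]
  simp [copies, Fintype.sum_sum_type, Finset.sum_ite_eq]

private lemma nbrSum_inr (t : ℕ) (f : Fin t × (Fin 3 ⊕ Fin 3) → ℕ) (i : Fin t) (b : Fin 3) :
    nbrSum (copies t (completeBipartiteGraph (Fin 3) (Fin 3))) f (i, Sum.inr b) =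
      ∑ a : Fin 3, f (i, Sum.inl a) := by
  unfold nbrSum
  rw [Fintype.sum_prod_type]
  simp [copies, Fintype.sum_sum_type, Finset.sum_ite_eq]

private lemma map_univ_prod (t : ℕ) (f : Fin t × (Fin 3 ⊕ Fin 3) → ℕ) :
    (Finset.univ.val.map f : Multiset ℕ) =
      ∑ i : Fin t,
        ((Finset.univ.val.map fun a : Fin 3 => f (i, Sum.inl a)) +
          (Finset.univ.val.map fun b : Fin 3 => f (i, Sum.inr b))) := by
  rw [← sum_singleton_multiset f, Fintype.sum_prod_type]
  refine Finset.sum_congr rfl fun i _ => ?_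
  rw [Fintype.sum_sum_type, ← sum_singleton_multiset, ← sum_singleton_multiset]

private lemma exists_fn_of_card_three (X : Multiset ℕ) (h : Multiset.card X = 3) :
    ∃ g : Fin 3 → ℕ, Finset.univ.val.map g = X := by
  obtain ⟨a, b, c, rfl⟩ := Multiset.card_eq_three.mp h
  refine ⟨![a, b, c], ?_⟩
  rw [Fin.univ_val_map]
  have h1 : List.ofFn ![a, b, c] = [a, b, c] := by
    simp [List.ofFn_succ]
  rw [h1]
  rfl

private lemma extract (m s : ℕ) (hs : 6 ≤ s) (W : Multiset ℕ) (hW : ∀ w ∈ W, 1 < w)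
    (T : Multiset (Multiset ℕ)) (hTcard : Multiset.card T = m + 1)
    (hT3 : ∀ X ∈ T, Multiset.card X = 3) (hTs : ∀ X ∈ T, X.sum = s)
    (hTsum : T.sum = W + {s - 2, 1, 1}) :
    ∃ P : Fin m → Multiset ℕ,
      (∑ i : Fin m, P i) = W ∧ (∀ i, Multiset.card (P i) = 3) ∧ (∀ i, (P i).sum = s) := by
  have hpos : ∀ x ∈ T.sum, 1 ≤ x := by
    intro x hx
    rw [hTsum, Multiset.mem_add] at hx
    rcases hx with hx | hx
    · exact le_of_lt (hW x hx)
    · simp only [Multiset.insert_eq_cons, Multiset.mem_cons, Multiset.mem_singleton] at hx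
      rcases hx with rfl | rfl | rfl <;> omega
  have hmem : s - 2 ∈ T.sum := by
    rw [hTsum, Multiset.mem_add]
    right; simp
  obtain ⟨X, hXT, hsX⟩ := Multiset.mem_join.mp hmem
  obtain ⟨R, rfl⟩ := Multiset.exists_cons_of_mem hsX
  have hRcard : Multiset.card R = 2 := by
    have := hT3 _ hXT; simp at this; omega
  have hRsum : R.sum = 2 := by
    have := hTs _ hXT
    rw [Multiset.sum_cons] at this
    omega
  obtain ⟨x, y, rfl⟩ := Multiset.card_eq_two.mp hRcard
  have hxy : x + y = 2 := by
    simpa using hRsum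
  have hx1 : 1 ≤ x := hpos x (Multiset.mem_join.mpr ⟨_, hXT, by simp⟩)
  have hy1 : 1 ≤ y := hpos y (Multiset.mem_join.mpr ⟨_, hXT, by simp⟩)
  have hx : x = 1 := by omega
  have hy : y = 1 := by omega
  subst hx hy
  set X : Multiset ℕ := (s - 2) ::ₘ {1, 1} with hXdef
  set P' : Multiset (Multiset ℕ) := T.erase X with hP'def
  have hTX : X ::ₘ P' = T := Multiset.cons_erase hXT
  have hP'sum : P'.sum = W := by
    have h1 : T.sum = X + P'.sum := by rw [← hTX, Multiset.sum_cons]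
    have h2 : X = ({s - 2, 1, 1} : Multiset ℕ) := rfl
    rw [hTsum, h2] at h1
    rw [add_comm] at h1
    exact (add_left_cancel h1).symm
  have hP'card : Multiset.card P' = m := by
    rw [hP'def, Multiset.card_erase_of_mem hXT, hTcard]
    rfl
  have hP'mem : ∀ Y ∈ P', Y ∈ T := fun Y hY => Multiset.mem_of_le (Multiset.erase_le _ _) hY
  set l : List (Multiset ℕ) := P'.toList with hldef
  have hlen : l.length = m := by rw [hldef, Multiset.length_toList, hP'card]
  refine ⟨fun i => l.get (Fin.cast hlen.symm i), ?_, ?_, ?_⟩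
  · have hofn : List.ofFn (fun i : Fin m => l.get (Fin.cast hlen.symm i)) = l := by
      apply List.ext_get
      · simp [hlen]
      · intro n h1 h2
        simp
    have := List.sum_ofFn (f := fun i : Fin m => l.get (Fin.cast hlen.symm i))
    rw [hofn] at this
    rw [← this, hldef, Multiset.sum_toList, hP'sum]
  · intro i
    exact hT3 _ (hP'mem _ (Multiset.mem_toList.mp (l.get_mem _)))
  · intro i
    exact hTs _ (hP'mem _ (Multiset.mem_toList.mp (l.get_mem _)))

theorem stmt_11 (m : ℕ) (hm : 0 < m) (hmo : Odd m)
    (W : Multiset ℕ) (hWgt : ∀ w ∈ W, 1 < w) (hWcard : Multiset.card W = 3 * m)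
    (hdvd : m ∣ W.sum) :
    IsFair (copies ((m + 1) / 2) (completeBipartiteGraph (Fin 3) (Fin 3)))
        (W + {W.sum / m - 2, 1, 1}) ↔
      ∃ P : Fin m → Multiset ℕ,
        (∑ i : Fin m, P i) = W ∧
        (∀ i : Fin m, Multiset.card (P i) = 3) ∧
        (∀ i : Fin m, (P i).sum = W.sum / m) := by
  set s : ℕ := W.sum / m with hsdef
  set t : ℕ := (m + 1) / 2 with htdef
  have h2t : 2 * t = m + 1 := by
    obtain ⟨r, hr⟩ := hmo
    omega
  have hsm : s * m = W.sum := Nat.div_mul_cancel hdvd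
  have hs6 : 6 ≤ s := by
    have hle : (Multiset.card W) • 2 ≤ W.sum :=
      Multiset.card_nsmul_le_sum (fun x hx => hWgt x hx)
    rw [hWcard, smul_eq_mul] at hle
    have : 6 * m ≤ s * m := by omega
    exact Nat.le_of_mul_le_mul_right this hm
  constructor
  · rintro ⟨f, k, hmap, hfair⟩
    set A : Fin t → Multiset ℕ :=
      fun i => Finset.univ.val.map (fun a : Fin 3 => f (i, Sum.inl a)) with hAdef
    set B : Fin t → Multiset ℕ :=
      fun i => Finset.univ.val.map (fun b : Fin 3 => f (i, Sum.inr b)) with hBdef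
    have hAsum : ∀ i, (A i).sum = k := by
      intro i
      have := hfair (i, Sum.inr 0)
      rw [nbrSum_inr] at this
      rw [← this]
      rfl
    have hBsum : ∀ i, (B i).sum = k := by
      intro i
      have := hfair (i, Sum.inl 0)
      rw [nbrSum_inl] at this
      rw [← this]
      rfl
    have hS : (∑ i : Fin t, (A i + B i)) = W + {s - 2, 1, 1} := by
      rw [← hmap, map_univ_prod]
    set T : Multiset (Multiset ℕ) :=
      Finset.univ.val.map A + Finset.univ.val.map B with hTdef
    have hTsum : T.sum = W + {s - 2, 1, 1} := by
      have h1 : T.sum = (∑ i : Fin t, A i) + ∑ i : Fin t, B i := by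
        rw [hTdef, Multiset.sum_add]; rfl
      rw [h1, ← Finset.sum_add_distrib, hS]
    have hTmem : ∀ X ∈ T, (Multiset.card X = 3 ∧ X.sum = k) := by
      intro X hX
      rw [hTdef, Multiset.mem_add] at hX
      rcases hX with hX | hX <;>
        obtain ⟨i, _, rfl⟩ := Multiset.mem_map.mp hX
      · exact ⟨by simp [hAdef], hAsum i⟩
      · exact ⟨by simp [hBdef], hBsum i⟩
    have hTcard : Multiset.card T = m + 1 := by
      rw [hTdef]
      simp
      omega
    have hks : k = s := by
      have hms : m * s = W.sum := by rw [mul_comm]; exact hsm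
      have hL : (W + ({s - 2, 1, 1} : Multiset ℕ)).sum = m * s + s := by
        rw [Multiset.sum_add]
        have h2 : ({s - 2, 1, 1} : Multiset ℕ).sum = s - 2 + 1 + 1 := by
          simp [Multiset.insert_eq_cons]
        omega
      have hR : T.sum.sum = (m + 1) * k := by
        have h1 : T.sum = ∑ i : Fin t, (A i + B i) := by rw [hS, hTsum]
        rw [h1]
        have hmsum : (∑ i : Fin t, (A i + B i)).sum =
            ∑ i : Fin t, Multiset.sumAddMonoidHom (A i + B i) :=
          map_sum Multiset.sumAddMonoidHom _ _
        rw [hmsum]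
        have h2 : ∀ i : Fin t, Multiset.sumAddMonoidHom (A i + B i) = 2 * k := by
          intro i
          show (A i + B i).sum = 2 * k
          rw [Multiset.sum_add, hAsum, hBsum]; ring
        rw [Finset.sum_congr rfl fun i _ => h2 i, Finset.sum_const, Finset.card_univ,
          Fintype.card_fin, smul_eq_mul]
        rw [show t * (2 * k) = 2 * t * k from by ring, h2t]
      rw [hTsum, hL] at hR
      have hx : (m + 1) * s = (m + 1) * k := by
        rw [Nat.succ_mul]; exact hR
      exact (Nat.eq_of_mul_eq_mul_left (by omega) hx).symm
    obtain ⟨P, h1, h2, h3⟩ := extract m s hs6 W hWgt T hTcard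
      (fun X hX => (hTmem X hX).1) (fun X hX => (hTmem X hX).2.trans hks) hTsum
    exact ⟨P, h1, h2, h3⟩
  · rintro ⟨P, hPsum, hPcard, hPs⟩
    set Q : Fin (m + 1) → Multiset ℕ := Fin.cons {s - 2, 1, 1} P with hQdef
    have hQcard : ∀ j, Multiset.card (Q j) = 3 := by
      intro j
      induction j using Fin.cases with
      | zero => simp [hQdef]
      | succ i => simpa [hQdef] using hPcard i
    have hQs : ∀ j, (Q j).sum = s := by
      intro j
      induction j using Fin.cases with
      | zero =>
        show ({s - 2, 1, 1} : Multiset ℕ).sum = s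
        have : ({s - 2, 1, 1} : Multiset ℕ).sum = s - 2 + 1 + 1 := by
          simp [Multiset.insert_eq_cons]
        omega
      | succ i => simpa [hQdef] using hPs i
    have hQsum : (∑ j : Fin (m + 1), Q j) = W + {s - 2, 1, 1} := by
      rw [hQdef, Fin.sum_cons, hPsum, add_comm]
    choose g hg using fun j => exists_fn_of_card_three (Q j) (hQcard j)
    have hcard2 : Fintype.card (Fin t × Bool) = m + 1 := by
      simp only [Fintype.card_prod, Fintype.card_fin, Fintype.card_bool]
      omega
    set e : Fin t × Bool ≃ Fin (m + 1) := Fintype.equivFinOfCardEq hcard2 with hedef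
    refine ⟨fun p => Sum.elim (g (e (p.1, false))) (g (e (p.1, true))) p.2, s, ?_, ?_⟩
    · rw [map_univ_prod]
      have hstep : ∀ i : Fin t,
          ((Finset.univ.val.map fun a : Fin 3 =>
              Sum.elim (g (e (i, false))) (g (e (i, true))) (Sum.inl a)) +
            (Finset.univ.val.map fun b : Fin 3 =>
              Sum.elim (g (e (i, false))) (g (e (i, true))) (Sum.inr b))) =
            Q (e (i, false)) + Q (e (i, true)) := by
        intro i
        show (Finset.univ.val.map (g (e (i, false)))) +
            (Finset.univ.val.map (g (e (i, true)))) = _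
        rw [hg, hg]
      rw [Finset.sum_congr rfl fun i _ => hstep i]
      have hre : (∑ p : Fin t × Bool, Q (e p)) = ∑ j : Fin (m + 1), Q j :=
        Fintype.sum_equiv e _ _ fun p => rfl
      rw [← hQsum, ← hre, Fintype.sum_prod_type]
      refine Finset.sum_congr rfl fun i _ => ?_
      rw [Fintype.sum_bool, add_comm]
    · rintro ⟨i, x | x⟩
      · rw [nbrSum_inl]
        show (∑ b : Fin 3, g (e (i, true)) b) = s
        have h1 : (∑ b : Fin 3, g (e (i, true)) b) = (Q (e (i, true))).sum := by
          rw [← hg]; rfl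
        rw [h1, hQs]
      · rw [nbrSum_inr]
        show (∑ a : Fin 3, g (e (i, false)) a) = s
        have h1 : (∑ a : Fin 3, g (e (i, false)) a) = (Q (e (i, false))).sum := by
          rw [← hg]; rfl
        rw [h1, hQs]
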